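/- Let P = {P_1, …, P_n} be a finite measurable partition of [0,1] and let ε > 0 and N₀ ∈ ℕ. Then there exists M > N₀ and a measurable set Y ⊆ [0,1] with λ(Y) ≥ 1 − ε such that for every 1 ≤ i ≤ n and every 0 ≤ k < M, the sets P_i ∩ Y and [k/M, (k+1)/M) ∩ Y are either disjoint or one contains the other in such a way that each interval piece [k/M,(k+1)/M) ∩ Y is contained in a single P_i ∩ Y. -/

import Mathlib

open MeasureTheory Set
open scoped ENNReal NNReal

/-- The quantity `|f|_ε`: infimum over measurable `X ⊆ [0,1]` with `λ(X) ≥ 1 - ε`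
of the essential supremum of `|f|` on `X`. -/
noncomputable def normEps (f : ℝ → ℂ) (ε : ℝ) : ℝ≥0∞ :=
  ⨅ (X : Set ℝ) (_ : MeasurableSet X) (_ : X ⊆ Icc (0:ℝ) 1)
    (_ : ENNReal.ofReal (1 - ε) ≤ volume X),
    essSup (fun x => (‖f x‖₊ : ℝ≥0∞)) (volume.restrict X)

theorem partition_approx_by_intervals (n : ℕ) (P : Fin n → Set ℝ)
    (hPm : ∀ i, MeasurableSet (P i))
    (hPd : Pairwise (Function.onFun Disjoint P))
    (hPu : (⋃ i, P i) = Icc (0:ℝ) 1)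
    (ε : ℝ) (hε : 0 < ε) (N₀ : ℕ) :
    ∃ M : ℕ, N₀ < M ∧ ∃ Y : Set ℝ, MeasurableSet Y ∧ Y ⊆ Icc (0:ℝ) 1 ∧
      ENNReal.ofReal (1 - ε) ≤ volume Y ∧
      ∀ k : ℕ, k < M → ∃ i : Fin n,
        Ico ((k:ℝ)/M) (((k:ℝ)+1)/M) ∩ Y ⊆ P i ∩ Y := by
  classical
  -- there is at least one index
  have h0 : (0:ℝ) ∈ ⋃ i, P i := by
    rw [hPu]; exact ⟨le_refl 0, zero_le_one⟩
  obtain ⟨i₀, -⟩ := mem_iUnion.mp h0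
  haveI : Nonempty (Fin n) := ⟨i₀⟩
  -- each piece has finite measure
  have hPfin : ∀ j, volume (P j) ≠ ∞ := by
    intro j
    have : volume (P j) ≤ volume (Icc (0:ℝ) 1) := by
      refine measure_mono ?_
      rw [← hPu]; exact subset_iUnion P j
    refine (this.trans_lt ?_).ne
    rw [Real.volume_Icc]; exact ENNReal.ofReal_lt_top
  -- small quantity
  set c : ℝ≥0∞ := ((2 * n + 2 : ℕ) : ℝ≥0∞) with hcdef
  have hden0 : c ≠ 0 := by rw [hcdef]; exact_mod_cast (by omega : 2 * n + 2 ≠ 0)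
  have hdentop : c ≠ ∞ := by rw [hcdef]; exact ENNReal.natCast_ne_top _
  set η : ℝ≥0∞ := ENNReal.ofReal ε / c with hηdef
  have hη0 : η ≠ 0 := by
    rw [hηdef]
    exact (ENNReal.div_pos (ENNReal.ofReal_pos.mpr hε).ne' hdentop).ne'
  -- open supersets
  choose U hPU hUopen hUfin hUlt using
    fun j => (hPm j).exists_isOpen_diff_lt (hPfin j) hη0
  -- compact subsets
  choose K hKP hKc hKlt using
    fun j => (hPm j).exists_isCompact_diff_lt (hPfin j) hη0
  -- thickening distances
  choose d hd0 hdsub using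
    fun j => (hKc j).exists_thickening_subset_open (hUopen j) ((hKP j).trans (hPU j))
  -- minimal distance
  set δ : ℝ := Finset.univ.inf' Finset.univ_nonempty d with hδdef
  have hδ0 : 0 < δ := by
    rw [hδdef]
    exact (Finset.lt_inf'_iff _).mpr fun j _ => hd0 j
  have hδle : ∀ j, δ ≤ d j := fun j => Finset.inf'_le _ (Finset.mem_univ j)
  -- choose M
  set M : ℕ := N₀ + ⌈1/δ⌉₊ + 1 with hMdef
  have hMpos : 0 < M := by omega
  have hMR : (0:ℝ) < M := by exact_mod_cast hMpos
  have hMδ : (1:ℝ)/M < δ := by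
    have h1 : (1/δ : ℝ) ≤ ⌈1/δ⌉₊ := Nat.le_ceil _
    have h2 : ((⌈1/δ⌉₊ : ℕ) : ℝ) < M := by exact_mod_cast (by omega : ⌈1/δ⌉₊ < M)
    have h3 : (1/δ : ℝ) < M := lt_of_le_of_lt h1 h2
    rw [div_lt_iff₀ hMR]
    calc (1:ℝ) = δ * (1/δ) := by field_simp
    _ < δ * M := by exact mul_lt_mul_of_pos_left h3 hδ0
  -- the bad set
  set B : Set ℝ := (⋃ j, (U j \ P j)) ∪ (Ico (0:ℝ) 1 \ ⋃ j, K j) with hBdef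
  have hBm : MeasurableSet B := by
    refine MeasurableSet.union (MeasurableSet.iUnion fun j => ((hUopen j).measurableSet.diff (hPm j))) ?_
    exact measurableSet_Ico.diff (MeasurableSet.iUnion fun j => (hKc j).measurableSet)
  -- measure of the bad set
  have hBμ : volume B ≤ ENNReal.ofReal ε := by
    have h1 : volume (⋃ j, (U j \ P j)) ≤ (n : ℝ≥0∞) * η := by
      refine (measure_iUnion_le _).trans ?_
      calc ∑' j : Fin n, volume (U j \ P j) ≤ ∑' _j : Fin n, η :=
            ENNReal.tsum_le_tsum fun j => (hUlt j).le
      _ = (n : ℝ≥0∞) * η := by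
            rw [tsum_fintype]; simp [Finset.sum_const, nsmul_eq_mul]
    have h2 : volume (Ico (0:ℝ) 1 \ ⋃ j, K j) ≤ (n : ℝ≥0∞) * η := by
      have hsub : Ico (0:ℝ) 1 \ ⋃ j, K j ⊆ ⋃ j, (P j \ K j) := by
        intro x hx
        have hx1 : x ∈ ⋃ j, P j := by
          rw [hPu]; exact ⟨hx.1.1, hx.1.2.le⟩
        obtain ⟨j, hj⟩ := mem_iUnion.mp hx1
        exact mem_iUnion.mpr ⟨j, hj, fun hK => hx.2 (mem_iUnion.mpr ⟨j, hK⟩)⟩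
      refine (measure_mono hsub).trans ?_
      refine (measure_iUnion_le _).trans ?_
      calc ∑' j : Fin n, volume (P j \ K j) ≤ ∑' _j : Fin n, η :=
            ENNReal.tsum_le_tsum fun j => (hKlt j).le
      _ = (n : ℝ≥0∞) * η := by
            rw [tsum_fintype]; simp [Finset.sum_const, nsmul_eq_mul]
    calc volume B ≤ (n : ℝ≥0∞) * η + (n : ℝ≥0∞) * η :=
          (measure_union_le _ _).trans (add_le_add h1 h2)
    _ ≤ c * η := by
          rw [← add_mul]
          refine mul_le_mul_left ?_ _
          rw [hcdef]
          have : ((n + n : ℕ) : ℝ≥0∞) ≤ ((2 * n + 2 : ℕ) : ℝ≥0∞) :=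
            Nat.cast_le.mpr (by omega)
          simpa using this
    _ = ENNReal.ofReal ε := by
          rw [hηdef]
          exact ENNReal.mul_div_cancel hden0 hdentop
  -- the good set
  refine ⟨M, by omega, Ico (0:ℝ) 1 \ B, measurableSet_Ico.diff hBm,
    (diff_subset.trans Ico_subset_Icc_self), ?_, ?_⟩
  · -- measure estimate
    have h1 : volume (Ico (0:ℝ) 1) - volume B ≤ volume (Ico (0:ℝ) 1 \ B) :=
      le_measure_diff
    have h2 : volume (Ico (0:ℝ) 1) = 1 := by
      rw [Real.volume_Ico]; norm_num
    calc ENNReal.ofReal (1 - ε) = 1 - ENNReal.ofReal ε := by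
          rw [ENNReal.ofReal_sub 1 hε.le, ENNReal.ofReal_one]
    _ ≤ volume (Ico (0:ℝ) 1) - volume B := by
          rw [h2]; exact tsub_le_tsub_left hBμ 1
    _ ≤ _ := h1
  · -- the interval condition
    intro k hk
    by_cases h : ∃ j, ((Ico ((k:ℝ)/M) (((k:ℝ)+1)/M)) ∩ K j).Nonempty
    · obtain ⟨j, z, hzI, hzK⟩ := h
      refine ⟨j, ?_⟩
      rintro x ⟨hxI, hxY⟩
      refine ⟨?_, hxY⟩
      -- x ∈ U j
      have hxU : x ∈ U j := by
        refine hdsub j ?_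
        rw [Metric.mem_thickening_iff]
        refine ⟨z, hzK, ?_⟩
        have hd1 : dist x z < 1/M := by
          rw [Real.dist_eq, abs_sub_lt_iff]
          have hsum : ((k:ℝ)+1)/M - (k:ℝ)/M = 1/M := by field_simp; ring
          constructor
          · have h1 := hxI.2; have h2 := hzI.1
            nlinarith [hsum]
          · have h1 := hzI.2; have h2 := hxI.1
            nlinarith [hsum]
        exact hd1.trans (hMδ.trans_le (hδle j))
      -- x ∉ B, so x ∈ P j
      by_contra hxP
      exact hxY.2 (Or.inl (mem_iUnion.mpr ⟨j, hxU, hxP⟩))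
    · -- interval misses every K j, hence is contained in B; intersection with Y is empty
      refine ⟨i₀, ?_⟩
      rintro x ⟨hxI, hxY⟩
      exfalso
      have hx01 : x ∈ Ico (0:ℝ) 1 := by
        constructor
        · exact le_trans (by positivity) hxI.1
        · refine lt_of_lt_of_le hxI.2 ?_
          rw [div_le_one hMR]
          exact_mod_cast (by omega : k + 1 ≤ M)
      have hxK : x ∉ ⋃ j, K j := by
        intro hxK
        obtain ⟨j, hj⟩ := mem_iUnion.mp hxK
        exact h ⟨j, x, hxI, hj⟩
      exact hxY.2 (Or.inr ⟨hx01, hxK⟩)
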